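/- Let p ≥ 11 be prime and let t ∈ ℤ/pℤ with t ≠ 0. Define the permutation π of ℤ/pℤ by π(0) = t, π(1) = 0, and π(x) = t·x⁻¹ for x ∉ {0, 1}. Then for a, r ∈ ℤ/pℤ with r ≠ 0, π preserves the progression (a, a+r, a+2r) if and only if (a, r) ∈ {(0, 3·2⁻¹), (3, −3·2⁻¹), (3⁻¹, 3⁻¹), (1, −3⁻¹)} (i.e., the only preserved progressions are (0, 3/2, 3) and (1/3, 2/3, 1), together with their reverses). -/

import Mathlib

/-- A permutation `π` of a finite abelian group `G` is *AP-destroying* if it preserves no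
3-term arithmetic progression `(a, a+r, a+2r)` with `r ≠ 0`, i.e. there are no `a, r` with
`r ≠ 0` and `π(a) - 2·π(a+r) + π(a+2r) = 0`. -/
def APDestroying {G : Type*} [AddCommGroup G] (π : Equiv.Perm G) : Prop :=
  ∀ a r : G, r ≠ 0 → π a - 2 • π (a + r) + π (a + 2 • r) ≠ 0

theorem preserved_aps_of_inversion_perm (p : ℕ) [Fact p.Prime] (hp : 11 ≤ p)
    (t : ZMod p) (ht : t ≠ 0) (π : Equiv.Perm (ZMod p))
    (hπ : ∀ x : ZMod p, π x = if x = 0 then t else if x = 1 then 0 else t * x⁻¹) :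
    ∀ a r : ZMod p, r ≠ 0 →
      (π a - 2 • π (a + r) + π (a + 2 • r) = 0 ↔
        (a, r) ∈ ({(0, 3 * 2⁻¹), (3, -(3 * 2⁻¹)), (3⁻¹, 3⁻¹), (1, -3⁻¹)} :
          Set (ZMod p × ZMod p))) := by
  have hchar : ∀ n : ℕ, 0 < n → n < 11 → (n : ZMod p) ≠ 0 := by
    intro n h1 h2 h
    rw [ZMod.natCast_eq_zero_iff] at h
    have := Nat.le_of_dvd h1 h
    omega
  have two : (2 : ZMod p) ≠ 0 := by
    have := hchar 2 (by norm_num) (by norm_num); exact_mod_cast this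
  have three : (3 : ZMod p) ≠ 0 := by
    have := hchar 3 (by norm_num) (by norm_num); exact_mod_cast this
  have h22 : (2 : ZMod p) * 2⁻¹ = 1 := mul_inv_cancel₀ two
  have h33 : (3 : ZMod p) * 3⁻¹ = 1 := mul_inv_cancel₀ three
  have n31 : (3 : ZMod p) ≠ 1 := fun h => two (by linear_combination h)
  have n32_0 : (3 : ZMod p) * 2⁻¹ ≠ 0 := mul_ne_zero three (inv_ne_zero two)
  have n32_1 : (3 : ZMod p) * 2⁻¹ ≠ 1 := fun h =>
    one_ne_zero (by linear_combination (2 : ZMod p) * h - (3 : ZMod p) * h22)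
  have ninv3_0 : (3 : ZMod p)⁻¹ ≠ 0 := inv_ne_zero three
  have ninv3_1 : (3 : ZMod p)⁻¹ ≠ 1 := fun h => two (by linear_combination (-3 : ZMod p) * h + h33)
  have n23_0 : (2 : ZMod p) * 3⁻¹ ≠ 0 := mul_ne_zero two ninv3_0
  have n23_1 : (2 : ZMod p) * 3⁻¹ ≠ 1 := fun h =>
    one_ne_zero (by linear_combination (-3 : ZMod p) * h + (2 : ZMod p) * h33)
  intro a r hr
  simp only [nsmul_eq_mul, Nat.cast_ofNat, Set.mem_insert_iff, Set.mem_singleton_iff,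
    Prod.mk.injEq]
  rw [hπ a, hπ (a + r), hπ (a + 2 * r)]
  constructor
  · intro heq
    by_cases ha0 : a = 0
    · -- a = 0
      subst ha0
      simp only [zero_add, if_pos rfl, ↓reduceIte] at heq
      rw [if_neg hr] at heq
      have h2r0 : ¬(2 * r = 0) := fun h => hr ((mul_eq_zero.mp h).resolve_left two)
      rw [if_neg h2r0] at heq
      by_cases hr1 : r = 1
      · exfalso
        rw [if_pos hr1, hr1] at heq
        have h21 : ¬((2 : ZMod p) * 1 = 1) := fun h => one_ne_zero (by linear_combination h)
        rw [if_neg h21, mul_one] at heq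
        field_simp at heq
        exact mul_ne_zero ht three (by linear_combination heq)
      · rw [if_neg hr1] at heq
        by_cases h2r1 : 2 * r = 1
        · exfalso
          rw [if_pos h2r1] at heq
          field_simp at heq
          have key : t * 3 = 0 := by linear_combination -2 * heq + t * h2r1
          exact mul_ne_zero ht three key
        · rw [if_neg h2r1] at heq
          field_simp at heq
          have key : t * (2 * r - 3) * r = 0 := by linear_combination r * heq
          have key2 := (mul_eq_zero.mp key).resolve_right hr
          have h23 : (2 : ZMod p) * r - 3 = 0 := (mul_eq_zero.mp key2).resolve_left ht
          left
          refine ⟨rfl, ?_⟩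
          field_simp
          linear_combination h23
    · by_cases ha1 : a = 1
      · -- a = 1
        subst ha1
        rw [if_neg ha0, if_pos rfl] at heq
        by_cases har0 : 1 + r = 0
        · exfalso
          rw [if_pos har0] at heq
          have h2r0 : ¬(1 + 2 * r = 0) := by
            intro h
            exact hr (by linear_combination h - har0)
          rw [if_neg h2r0] at heq
          have h2r1 : ¬(1 + 2 * r = 1) := by
            intro h
            exact hr ((mul_eq_zero.mp (by linear_combination h)).resolve_left two)
          rw [if_neg h2r1] at heq
          have hm1 : 1 + 2 * r = -1 := by linear_combination 2 * har0
          rw [hm1] at heq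
          have hinv : (-1 : ZMod p)⁻¹ = -1 :=
            inv_eq_of_mul_eq_one_right (by ring)
          rw [hinv] at heq
          have key : t * 3 = 0 := by linear_combination -heq
          exact mul_ne_zero ht three key
        · have har1 : ¬(1 + r = 1) := by
            intro h; exact hr (by linear_combination h)
          rw [if_neg har0, if_neg har1] at heq
          by_cases h2r0 : 1 + 2 * r = 0
          · exfalso
            rw [if_pos h2r0] at heq
            have h12 : 1 + r = 2⁻¹ := by
              field_simp
              linear_combination h2r0
            rw [h12] at heq
            rw [inv_inv] at heq
            have key : t * 3 = 0 := by linear_combination -heq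
            exact mul_ne_zero ht three key
          · by_cases h2r1 : 1 + 2 * r = 1
            · exact absurd ((mul_eq_zero.mp (by linear_combination h2r1)).resolve_left two) hr
            · rw [if_neg h2r0, if_neg h2r1] at heq
              field_simp at heq
              have key : t * (3 * r + 1) = 0 := by linear_combination -heq
              have h31 : (3 : ZMod p) * r + 1 = 0 := (mul_eq_zero.mp key).resolve_left ht
              right; right; right
              refine ⟨rfl, ?_⟩
              have h9 : (3 : ZMod p) * r = -1 := by linear_combination h31
              calc r = 3⁻¹ * (3 * r) := by
                    rw [← mul_assoc, inv_mul_cancel₀ three, one_mul]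
                _ = -3⁻¹ := by rw [h9]; ring
      · -- a ∉ {0, 1}
        rw [if_neg ha0, if_neg ha1] at heq
        by_cases har0 : a + r = 0
        · exfalso
          rw [if_pos har0] at heq
          by_cases h2r0 : a + 2 * r = 0
          · exact hr (by linear_combination h2r0 - har0)
          · by_cases h2r1 : a + 2 * r = 1
            · rw [if_neg h2r0, if_pos h2r1] at heq
              have ham1 : a = -1 := by linear_combination 2 * har0 - h2r1
              rw [ham1] at heq
              have hinv : (-1 : ZMod p)⁻¹ = -1 := inv_eq_of_mul_eq_one_right (by ring)
              rw [hinv] at heq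
              have key : t * 3 = 0 := by linear_combination -heq
              exact mul_ne_zero ht three key
            · rw [if_neg h2r0, if_neg h2r1] at heq
              field_simp at heq
              have key : t * (2 * r) * r = 0 := by
                linear_combination heq + (2 * t * (a + r) - 2 * t) * har0
              have key2 := (mul_eq_zero.mp key).resolve_right hr
              have key3 : (2 : ZMod p) * r = 0 := (mul_eq_zero.mp key2).resolve_left ht
              exact hr ((mul_eq_zero.mp key3).resolve_left two)
        · by_cases har1 : a + r = 1
          · exfalso
            rw [if_neg har0, if_pos har1] at heq
            by_cases h2r0 : a + 2 * r = 0
            · rw [if_pos h2r0] at heq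
              field_simp at heq
              have key : t * 3 = 0 := by
                linear_combination heq + t * h2r0 - 2 * t * har1
              exact mul_ne_zero ht three key
            · by_cases h2r1 : a + 2 * r = 1
              · exact hr (by linear_combination h2r1 - har1)
              · rw [if_neg h2r0, if_neg h2r1] at heq
                field_simp at heq
                have key : t * 2 = 0 := by
                  linear_combination heq - 2 * t * har1
                exact mul_ne_zero ht two key
          · rw [if_neg har0, if_neg har1] at heq
            by_cases h2r0 : a + 2 * r = 0
            · -- solution (3, -3/2)
              rw [if_pos h2r0] at heq
              field_simp at heq
              have key : t * (2 * r + 3) * r = 0 := by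
                linear_combination heq + t * (1 + r - a) * h2r0
              have key2 := (mul_eq_zero.mp key).resolve_right hr
              have h23 : (2 : ZMod p) * r + 3 = 0 := (mul_eq_zero.mp key2).resolve_left ht
              right; left
              constructor
              · linear_combination h2r0 - h23
              · have h9 : (2 : ZMod p) * r = -3 := by linear_combination h23
                calc r = 2⁻¹ * (2 * r) := by
                      rw [← mul_assoc, inv_mul_cancel₀ two, one_mul]
                  _ = -(3 * 2⁻¹) := by rw [h9]; ring
            · by_cases h2r1 : a + 2 * r = 1
              · -- solution (1/3, 1/3)
                rw [if_neg h2r0, if_pos h2r1] at heq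
                field_simp at heq
                have key : t * (r - a) = 0 := by linear_combination heq
                have hra : r - a = 0 := (mul_eq_zero.mp key).resolve_left ht
                right; right; left
                have ha3 : a = 3⁻¹ := by
                  field_simp
                  linear_combination h2r1 - 2 * hra
                exact ⟨ha3, by linear_combination hra + ha3⟩
              · -- generic: no solution
                exfalso
                rw [if_neg h2r0, if_neg h2r1] at heq
                field_simp at heq
                have key : 2 * t * r * r = 0 := by linear_combination heq
                exact mul_ne_zero (mul_ne_zero (mul_ne_zero two ht) hr) hr key
  · rintro (⟨ha, hrv⟩ | ⟨ha, hrv⟩ | ⟨ha, hrv⟩ | ⟨ha, hrv⟩) <;> subst ha <;> subst hrv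
    · have h1 : (0 : ZMod p) + 3 * 2⁻¹ ≠ 0 := by
        simpa using mul_ne_zero three (inv_ne_zero two)
      have h2 : (0 : ZMod p) + 3 * 2⁻¹ ≠ 1 := by
        rw [zero_add]
        intro h
        apply one_ne_zero (α := ZMod p)
        field_simp at h
        linear_combination h
      have h3 : (0 : ZMod p) + 2 * (3 * 2⁻¹) = 3 := by
        rw [zero_add]
        field_simp
      rw [if_pos rfl, if_neg h1, if_neg h2, h3]
      have h4 : (3 : ZMod p) ≠ 1 := by
        intro h
        exact two (by linear_combination h)
      rw [if_neg three, if_neg h4, zero_add]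
      field_simp
      ring
    · have e1 : (3 : ZMod p) + -(3 * 2⁻¹) = 3 * 2⁻¹ := by
        linear_combination (-3 : ZMod p) * h22
      have e2 : (3 : ZMod p) + 2 * -(3 * 2⁻¹) = 0 := by
        linear_combination (-3 : ZMod p) * h22
      rw [e1, e2, if_neg three, if_neg n31, if_neg n32_0, if_neg n32_1, if_pos rfl]
      simp only [mul_inv, inv_inv]
      linear_combination (-t) * h33
    · have e1 : (3⁻¹ : ZMod p) + 3⁻¹ = 2 * 3⁻¹ := by ring
      have e2 : (3⁻¹ : ZMod p) + 2 * 3⁻¹ = 1 := by linear_combination h33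
      rw [e1, e2, if_neg ninv3_0, if_neg ninv3_1, if_neg n23_0, if_neg n23_1,
        if_neg one_ne_zero, if_pos rfl]
      simp only [mul_inv, inv_inv]
      linear_combination (-3 * t) * h22
    · have e1 : (1 : ZMod p) + -3⁻¹ = 2 * 3⁻¹ := by linear_combination -h33
      have e2 : (1 : ZMod p) + 2 * -3⁻¹ = 3⁻¹ := by linear_combination -h33
      rw [e1, e2, if_neg one_ne_zero, if_pos rfl, if_neg n23_0, if_neg n23_1,
        if_neg ninv3_0, if_neg ninv3_1]
      simp only [mul_inv, inv_inv]
      linear_combination (-3 * t) * h22
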